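/- For all r, s ∈ ℤ^M, the commutator of derivations satisfies [D(r̲, r), D(s̲, s)] = ⟨r̲, s⟩ · D((r+s)̲, r+s), where (r+s)̲ = r̲ + s̲. -/

import Mathlib

/-- The "underline" map on `ℤ^{2m+1}`:
`ul r = (r_{m+1}+r_M, …, r_{2m}+r_M, −r_1+r_M, …, −r_m+r_M, −Σ_{i=1}^{2m} r_i)`. -/
def ul (m : ℕ) (r : Fin (2*m+1) → ℤ) : Fin (2*m+1) → ℤ := fun i =>
  if h : (i : ℕ) < m then r ⟨(i : ℕ) + m, by omega⟩ + r ⟨2*m, by omega⟩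
  else if h2 : (i : ℕ) < 2*m then - r ⟨(i : ℕ) - m, by omega⟩ + r ⟨2*m, by omega⟩
  else - ∑ j : Fin (2*m), r ⟨(j : ℕ), by have := j.isLt; omega⟩

/-- The Laurent polynomial algebra `A = ℂ[t₁^{±1}, …, t_M^{±1}]`, realized as the
group algebra of `ℤ^M` over `ℂ`; the monomial `t^r` is `AddMonoidAlgebra.single r 1`. -/
noncomputable abbrev LaurentA (M : ℕ) := AddMonoidAlgebra ℂ (Fin M → ℤ)

/-- `IsD M u r D` says that `D` is the derivation `D(u,r)` of `A`, i.e. the (unique)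
`ℂ`-linear derivation with `D(t^s) = ⟨u,s⟩ · t^{r+s}` for all `s ∈ ℤ^M`. -/
def IsD (M : ℕ) (u : Fin M → ℂ) (r : Fin M → ℤ)
    (D : Derivation ℂ (LaurentA M) (LaurentA M)) : Prop :=
  ∀ s : Fin M → ℤ,
    D (AddMonoidAlgebra.single s (1 : ℂ)) =
      (∑ i, u i * (s i : ℂ)) • AddMonoidAlgebra.single (r + s) (1 : ℂ)

def ext' (m : ℕ) (r : Fin (2*m+1) → ℤ) : ℕ → ℤ :=
  fun i => if h : i < 2*m+1 then r ⟨i, h⟩ else 0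

lemma ext'_apply (m : ℕ) (r : Fin (2*m+1) → ℤ) (i : ℕ) (h : i < 2*m+1) :
    ext' m r i = r ⟨i, h⟩ := by simp [ext', h]

lemma ext'_congr (m : ℕ) (r : Fin (2*m+1) → ℤ) {i j : ℕ} (h : i = j) :
    ext' m r i = ext' m r j := by rw [h]

def Bz (m : ℕ) (r s : Fin (2*m+1) → ℤ) : ℤ := ∑ i, ul m r i * s i

lemma Bz_expand (m : ℕ) (r s : Fin (2*m+1) → ℤ) :
    Bz m r s = (∑ i ∈ Finset.range m, (ext' m r (i+m) + ext' m r (2*m)) * ext' m s i)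
      + (∑ i ∈ Finset.range m, (- ext' m r i + ext' m r (2*m)) * ext' m s (m+i))
      + (- ∑ j ∈ Finset.range (2*m), ext' m r j) * ext' m s (2*m) := by
  set F : ℕ → ℤ := fun i =>
    (if i < m then ext' m r (i+m) + ext' m r (2*m)
     else if i < 2*m then - ext' m r (i-m) + ext' m r (2*m)
     else - ∑ j ∈ Finset.range (2*m), ext' m r j) * ext' m s i with hF
  have key : Bz m r s = ∑ i ∈ Finset.range (2*m+1), F i := by
    rw [← Fin.sum_univ_eq_sum_range]
    refine Finset.sum_congr rfl fun i _ => ?_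
    have hi := i.isLt
    simp only [hF, ul]
    rcases lt_or_ge (i : ℕ) m with h | h
    · rw [dif_pos h, if_pos h, ext'_apply _ _ _ (by omega), ext'_apply _ _ _ (by omega),
        ext'_apply _ s _ (by omega), Fin.eta]
    · rcases lt_or_ge (i : ℕ) (2*m) with h2 | h2
      · rw [dif_neg (by omega), dif_pos h2, if_neg (by omega), if_pos h2,
          ext'_apply _ _ _ (by omega), ext'_apply _ _ _ (by omega),
          ext'_apply _ s _ (by omega), Fin.eta]
      · rw [dif_neg (by omega), dif_neg (by omega), if_neg (by omega), if_neg (by omega),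
          ext'_apply _ s _ (by omega), Fin.eta]
        congr 2
        rw [← Fin.sum_univ_eq_sum_range (fun j => ext' m r j)]
        refine Finset.sum_congr rfl fun j _ => ?_
        rw [ext'_apply _ _ _ (by have := j.isLt; omega)]
  rw [key, Finset.sum_range_succ]
  have hsplit : ∑ i ∈ Finset.range (2*m), F i
      = (∑ i ∈ Finset.range m, F i) + ∑ i ∈ Finset.range m, F (m+i) := by
    rw [show 2*m = m+m by ring, Finset.sum_range_add]
  rw [hsplit]
  congr 1
  · congr 1
    · refine Finset.sum_congr rfl fun i hi => ?_
      simp only [Finset.mem_range] at hi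
      simp only [hF]
      rw [if_pos hi]
    · refine Finset.sum_congr rfl fun i hi => ?_
      simp only [Finset.mem_range] at hi
      simp only [hF]
      rw [if_neg (by omega), if_pos (by omega), ext'_congr m r (show m+i-m = i by omega)]
  · simp only [hF]
    rw [if_neg (by omega), if_neg (by omega)]

lemma Bz_skew (m : ℕ) (r s : Fin (2*m+1) → ℤ) : Bz m s r = - Bz m r s := by
  have h : Bz m r s + Bz m s r = 0 := by
    rw [Bz_expand, Bz_expand]
    have hsa : ∑ j ∈ Finset.range (2*m), ext' m r j
        = (∑ j ∈ Finset.range m, ext' m r j) + ∑ j ∈ Finset.range m, ext' m r (m+j) := by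
      rw [show 2*m = m+m by ring, Finset.sum_range_add]
    have hsb : ∑ j ∈ Finset.range (2*m), ext' m s j
        = (∑ j ∈ Finset.range m, ext' m s j) + ∑ j ∈ Finset.range m, ext' m s (m+j) := by
      rw [show 2*m = m+m by ring, Finset.sum_range_add]
    rw [hsa, hsb]
    simp only [neg_add, add_mul, neg_mul, Finset.sum_mul, ← Finset.sum_neg_distrib,
      ← Finset.sum_add_distrib]
    refine Finset.sum_eq_zero fun i _ => ?_
    rw [ext'_congr m r (show i+m = m+i by omega), ext'_congr m s (show i+m = m+i by omega)]
    ring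
  linarith

lemma ul_add (m : ℕ) (r s : Fin (2*m+1) → ℤ) : ul m (r + s) = ul m r + ul m s := by
  funext i
  simp only [ul, Pi.add_apply]
  split_ifs with h h2
  · ring
  · ring
  · rw [← neg_add, ← Finset.sum_add_distrib]

lemma Bz_add_right (m : ℕ) (u v w : Fin (2*m+1) → ℤ) :
    Bz m u (v + w) = Bz m u v + Bz m u w := by
  simp only [Bz, Pi.add_apply, mul_add, Finset.sum_add_distrib]

lemma Bz_add_left (m : ℕ) (u v w : Fin (2*m+1) → ℤ) :
    Bz m (u + v) w = Bz m u w + Bz m v w := by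
  simp only [Bz, ul_add, Pi.add_apply, add_mul, Finset.sum_add_distrib]

lemma cast_sum (m : ℕ) (u v : Fin (2*m+1) → ℤ) :
    (∑ i, (ul m u i : ℂ) * (v i : ℂ)) = ((Bz m u v : ℤ) : ℂ) := by
  rw [Bz]; push_cast; rfl

/-- For all `r, s ∈ ℤ^{2m+1}`: `[D(r̲,r), D(s̲,s)] = ⟨r̲,s⟩ · D((r+s)̲, r+s)`,
where `(r+s)̲ = r̲ + s̲`. -/
theorem stmt8 (m : ℕ) (hm : 1 ≤ m) (r s : Fin (2*m+1) → ℤ)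
    (Dr Ds Drs : Derivation ℂ (LaurentA (2*m+1)) (LaurentA (2*m+1)))
    (hr : IsD (2*m+1) (fun i => (ul m r i : ℂ)) r Dr)
    (hs : IsD (2*m+1) (fun i => (ul m s i : ℂ)) s Ds)
    (hrs : IsD (2*m+1) (fun i => (ul m (r + s) i : ℂ)) (r + s) Drs) :
    ul m (r + s) = ul m r + ul m s ∧
    ⁅Dr, Ds⁆ = ((∑ i, ul m r i * s i : ℤ) : ℂ) • Drs := by
  refine ⟨ul_add m r s, ?_⟩
  have hcast : ((∑ i, ul m r i * s i : ℤ) : ℂ) = ((Bz m r s : ℤ) : ℂ) := by rw [Bz]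
  have key : ∀ p : Fin (2*m+1) → ℤ,
      ⁅Dr, Ds⁆ (AddMonoidAlgebra.single p (1 : ℂ)) =
        (((Bz m r s : ℤ) : ℂ) • Drs) (AddMonoidAlgebra.single p (1 : ℂ)) := by
    intro p
    rw [Derivation.commutator_apply, hs p, hr p, Derivation.map_smul, Derivation.map_smul,
      hr (s + p), hs (r + p), Derivation.smul_apply, hrs p]
    rw [cast_sum, cast_sum, cast_sum, cast_sum, cast_sum]
    have e1 : r + (s + p) = (r + s) + p := by abel
    have e2 : s + (r + p) = (r + s) + p := by abel
    rw [e1, e2, smul_smul, smul_smul, smul_smul, ← sub_smul]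
    congr 1
    rw [Bz_add_right m r s p, Bz_add_right m s r p, Bz_skew m r s, Bz_add_left m r s p]
    push_cast
    ring
  rw [hcast]
  apply Derivation.ext
  intro a
  induction a using AddMonoidAlgebra.induction_linear with
  | zero => simp
  | add f g hf hg => rw [map_add, map_add, hf, hg]
  | single p b =>
      show ⁅Dr, Ds⁆ (AddMonoidAlgebra.single p b) =
        (((Bz m r s : ℤ) : ℂ) • Drs) (AddMonoidAlgebra.single p b)
      have hb : (AddMonoidAlgebra.single p b : LaurentA (2*m+1))
          = b • AddMonoidAlgebra.single p (1 : ℂ) := by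
        rw [AddMonoidAlgebra.smul_single', mul_one]
      rw [hb, Derivation.map_smul, Derivation.map_smul, key p]
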